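/- Let k > 1 and let f : ℝ → ℝ be a positive function that is continuous on [0, 1] with f(0) > k. Then there exists R* ∈ (0, (k−1)/k) with f(R*) = (k−1)/((k−1)/k − R*), i.e., the system admits at least one endemic equilibrium, namely (R*/(k−1), R*). -/

import Mathlib

/-- If f(0) > k then the system admits at least one endemic equilibrium
(R*/(k−1), R*) with R* ∈ (0, (k−1)/k). -/
theorem sir_endemic_equilibrium_existence_of_f0_gt_k
    (k : ℝ) (hk : 1 < k)
    (f : ℝ → ℝ) (hf_pos : ∀ x, 0 < f x) (hf_cont : ContinuousOn f (Set.Icc 0 1))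
    (hf0 : k < f 0) :
    ∃ Rstar ∈ Set.Ioo (0 : ℝ) ((k - 1) / k),
      f Rstar = (k - 1) / ((k - 1) / k - Rstar) ∧
      0 < Rstar / (k - 1) ∧
      f Rstar * (1 - Rstar / (k - 1) - Rstar) - k = 0 ∧
      (k - 1) * (Rstar / (k - 1)) - Rstar = 0 := by
  have hk0 : (0:ℝ) < k := by linarith
  have hk1 : (0:ℝ) < k - 1 := by linarith
  set b : ℝ := (k - 1) / k with hb
  have hb0 : 0 < b := div_pos hk1 hk0
  have hb1 : b < 1 := (div_lt_one hk0).2 (by linarith)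
  have hsub : Set.Icc (0:ℝ) b ⊆ Set.Icc (0:ℝ) 1 :=
    Set.Icc_subset_Icc le_rfl hb1.le
  set h : ℝ → ℝ := fun R => f R * (b - R) - (k - 1) with hh
  have hcont : ContinuousOn h (Set.Icc 0 b) := by
    apply ContinuousOn.sub
    · exact ((hf_cont.mono hsub).mul (continuousOn_const.sub continuousOn_id))
    · exact continuousOn_const
  have hha : 0 < h 0 := by
    have : h 0 = f 0 * b - (k - 1) := by simp [hh]
    rw [this, hb]
    have : k * ((k-1)/k) < f 0 * ((k-1)/k) :=
      mul_lt_mul_of_pos_right hf0 hb0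
    have hkb : k * ((k-1)/k) = k - 1 := by field_simp
    linarith
  have hhb : h b < 0 := by
    have : h b = -(k - 1) := by simp [hh]
    rw [this]; linarith
  have := intermediate_value_Ioo' hb0.le hcont
  have hmem : (0:ℝ) ∈ Set.Ioo (h b) (h 0) := ⟨hhb, hha⟩
  obtain ⟨R, hR, hval⟩ := this hmem
  have hbR : 0 < b - R := by linarith [hR.2]
  have hfR : f R * (b - R) = k - 1 := by
    have := hval; simp [hh] at this; linarith
  refine ⟨R, hR, ?_, ?_, ?_, ?_⟩
  · field_simp
    linarith [hfR]
  · exact div_pos hR.1 hk1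
  · have h1 : 1 - R / (k - 1) - R = k * (b - R) / (k - 1) := by
      rw [hb]; field_simp; ring
    rw [h1]
    rw [mul_div_assoc] at *
    field_simp
    nlinarith [hfR]
  · field_simp
    ring
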